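/- arXiv:1506.03467 — 8 statements merged into one kernel-verified Lean document; each statement's English description precedes it below -/
import Mathlib

section
/- If (a_n) is a sequence of positive rationals with a_n → 0 and Σ a_n = ∞, then for every positive real x there is a subsequence (a_{n_k}) with Σ_k a_{n_k} = x. -/
open Filter Finset

open scoped Classical in
/-- Greedy construction: at each step record (index chosen, remaining budget). -/
noncomputable def pintilieF (a : ℕ → ℚ) (x : ℝ)
    (hex : ∀ (m : ℕ) (r : ℝ), 0 < r → ∃ n, m < n ∧ (a n : ℝ) < r)
    (hx : 0 < x) : ℕ → {p : ℕ × ℝ // 0 < p.2}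
  | 0 =>
    ⟨(Nat.find (hex 0 x hx), x - a (Nat.find (hex 0 x hx))), by
      have h := (Nat.find_spec (hex 0 x hx)).2
      dsimp only
      linarith⟩
  | k + 1 =>
    let p := pintilieF a x hex hx k
    ⟨(Nat.find (hex p.1.1 p.1.2 p.2),
      p.1.2 - a (Nat.find (hex p.1.1 p.1.2 p.2))), by
      have h := (Nat.find_spec (hex p.1.1 p.1.2 p.2)).2
      dsimp only
      linarith⟩

theorem pintilie_representation (a : ℕ → ℚ)
    (hpos : ∀ n, 0 < a n)
    (hnull : Filter.Tendsto a Filter.atTop (nhds 0))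
    (hdiv : Filter.Tendsto (fun N => ∑ n ∈ Finset.range N, (a n : ℝ))
      Filter.atTop Filter.atTop) :
    ∀ x : ℝ, 0 < x → ∃ φ : ℕ → ℕ, StrictMono φ ∧
      HasSum (fun k => (a (φ k) : ℝ)) x := by
  classical
  intro x hx
  -- small terms exist beyond any index
  have hex : ∀ (m : ℕ) (r : ℝ), 0 < r → ∃ n, m < n ∧ (a n : ℝ) < r := by
    intro m r hr
    obtain ⟨q, hq0, hqr⟩ := exists_rat_btwn hr
    have hq0' : (0 : ℚ) < q := by exact_mod_cast hq0
    have h1 : ∀ᶠ n in atTop, a n < q := hnull.eventually (gt_mem_nhds hq0')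
    obtain ⟨n, hn1, hn2⟩ := (h1.and (eventually_gt_atTop m)).exists
    exact ⟨n, hn2, lt_trans (by exact_mod_cast hn1) hqr⟩
  set F := pintilieF a x hex hx with hF
  set φ : ℕ → ℕ := fun k => (F k).1.1 with hφ
  set r : ℕ → ℝ := fun k => (F k).1.2 with hr
  -- unfolding equations
  have hsucc : ∀ k, φ (k + 1) = Nat.find (hex (φ k) (r k) (F k).2) ∧
      r (k + 1) = r k - a (φ (k + 1)) := by
    intro k
    constructor <;> simp [hφ, hr, hF, pintilieF]
  have h0 : (a (φ 0) : ℝ) < x ∧ r 0 = x - a (φ 0) := by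
    constructor
    · exact (Nat.find_spec (hex 0 x hx)).2
    · simp [hφ, hr, hF, pintilieF]
  have hrpos : ∀ k, 0 < r k := fun k => (F k).2
  have hlt : ∀ k, φ k < φ (k + 1) := by
    intro k
    rw [(hsucc k).1]
    exact (Nat.find_spec (hex (φ k) (r k) (F k).2)).1
  have hmono : StrictMono φ := strictMono_nat_of_lt_succ hlt
  -- r k = x - partial sum
  have hsum : ∀ k, r k = x - ∑ j ∈ range (k + 1), (a (φ j) : ℝ) := by
    intro k
    induction k with
    | zero => simp [h0.2]
    | succ k ih =>
      rw [(hsucc k).2, ih, Finset.sum_range_succ (fun j => ((a (φ j) : ℝ))) (k + 1)]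
      linarith
  -- r is antitone
  have hranti : ∀ k l, k ≤ l → r l ≤ r k := by
    intro k l hkl
    rw [hsum k, hsum l]
    have : ∑ j ∈ range (k + 1), (a (φ j) : ℝ) ≤ ∑ j ∈ range (l + 1), (a (φ j) : ℝ) := by
      apply Finset.sum_le_sum_of_subset_of_nonneg
      · exact Finset.range_subset_range.mpr (by omega)
      · intro i _ _; exact_mod_cast (hpos (φ i)).le
    linarith
  -- the infimum of r
  have hbdd : BddBelow (Set.range r) := ⟨0, by rintro _ ⟨k, rfl⟩; exact (hrpos k).le⟩
  set L := ⨅ k, r k with hL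
  have hLle : ∀ k, L ≤ r k := fun k => ciInf_le hbdd k
  have hL0 : 0 ≤ L := le_ciInf fun k => (hrpos k).le
  have hrL : Tendsto r atTop (nhds L) :=
    tendsto_atTop_ciInf (fun k l hkl => hranti k l hkl) hbdd
  -- partial sums are bounded by x
  have hSbd : ∀ k, ∑ j ∈ range (k + 1), (a (φ j) : ℝ) ≤ x := by
    intro k
    have := hrpos k
    rw [hsum k] at this
    linarith
  -- L = 0
  have hLzero : L = 0 := by
    by_contra hne
    have hLpos : 0 < L := lt_of_le_of_ne hL0 (Ne.symm hne)
    obtain ⟨q, hq0, hqL⟩ := exists_rat_btwn hLpos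
    have hq0' : (0 : ℚ) < q := by exact_mod_cast hq0
    obtain ⟨N, hN⟩ := eventually_atTop.mp (hnull.eventually (gt_mem_nhds hq0'))
    -- once φ k ≥ N, we take consecutive indices
    have hstep : ∀ k, N ≤ φ k → φ (k + 1) = φ k + 1 := by
      intro k hk
      have hple : Nat.find (hex (φ k) (r k) (F k).2) ≤ φ k + 1 := by
        apply Nat.find_le
        refine ⟨by omega, ?_⟩
        have : a (φ k + 1) < q := hN (φ k + 1) (by omega)
        have h2 : (a (φ k + 1) : ℝ) < q := by exact_mod_cast this
        exact lt_of_lt_of_le (h2.trans hqL) (hLle k)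
      have hgt := (Nat.find_spec (hex (φ k) (r k) (F k).2)).1
      rw [(hsucc k).1]
      omega
    have hφge : ∀ k, k ≤ φ k := fun k => hmono.le_apply
    -- for k ≥ N, φ k = φ N + (k - N)
    have hshift : ∀ m, φ (N + m) = φ N + m := by
      intro m
      induction m with
      | zero => simp
      | succ m ih =>
        have : N ≤ φ (N + m) := le_trans (by omega) (hφge (N + m))
        rw [← Nat.add_assoc, hstep (N + m) this, ih]
        omega
    -- partial sums grow like the divergent series
    set T : ℕ → ℝ := fun M => ∑ n ∈ range M, (a n : ℝ) with hT
    obtain ⟨M, hM1, hM2⟩ := ((hdiv.eventually (eventually_gt_atTop (x + T (φ N)))).and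
      (eventually_ge_atTop (φ N))).exists
    set m := M - φ N with hm
    have hMeq : φ N + m = M := by rw [hm]; exact Nat.add_sub_cancel' hM2
    have hkey : T M - T (φ N) ≤ ∑ j ∈ range (N + m + 1), (a (φ j) : ℝ) := by
      have h1 : T M - T (φ N) = ∑ i ∈ range m, (a (φ N + i) : ℝ) := by
        rw [← hMeq, hT]
        simp only
        rw [Finset.sum_range_add]
        ring
      rw [h1]
      have h2 : ∑ i ∈ range m, (a (φ N + i) : ℝ) = ∑ j ∈ Ico N (N + m), (a (φ j) : ℝ) := by
        rw [Finset.sum_Ico_eq_sum_range]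
        apply Finset.sum_congr (by rw [Nat.add_sub_cancel_left])
        intro i _
        rw [hshift i]
      rw [h2]
      apply Finset.sum_le_sum_of_subset_of_nonneg
      · intro j hj
        rw [Finset.mem_Ico] at hj
        rw [Finset.mem_range]
        omega
      · intro i _ _; exact_mod_cast (hpos (φ i)).le
    have := hSbd (N + m)
    linarith
  -- conclude
  refine ⟨φ, hmono, ?_⟩
  rw [hasSum_iff_tendsto_nat_of_nonneg (fun i => by exact_mod_cast (hpos (φ i)).le)]
  have h1 : Tendsto (fun k => ∑ j ∈ range (k + 1), (a (φ j) : ℝ)) atTop (nhds x) := by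
    have : (fun k => ∑ j ∈ range (k + 1), (a (φ j) : ℝ)) = fun k => x - r k := by
      funext k; rw [hsum k]; ring
    rw [this]
    have := (tendsto_const_nhds (x := x) (f := atTop (α := ℕ))).sub hrL
    rwa [hLzero, sub_zero] at this
  exact (tendsto_add_atTop_iff_nat 1).mp h1
end

section
/- A function f : ℤ → ℤ is a quasihomomorphism if the set {f(x+y) − f(x) − f(y) : x, y ∈ ℤ} is finite. If f and g are quasihomomorphisms, then so is their composition f ∘ g. -/
/-- A quasihomomorphism of ℤ. -/
def QuasiHom (f : ℤ → ℤ) : Prop :=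
  {z : ℤ | ∃ x y : ℤ, z = f (x + y) - f x - f y}.Finite

lemma quasiHom_bound {f : ℤ → ℤ} (hf : QuasiHom f) :
    ∃ C : ℤ, ∀ x y : ℤ, |f (x + y) - f x - f y| ≤ C := by
  obtain ⟨C, hC⟩ := (hf.image abs).bddAbove
  exact ⟨C, fun x y => hC ⟨_, ⟨x, y, rfl⟩, rfl⟩⟩

theorem quasiHom_comp (f g : ℤ → ℤ) (hf : QuasiHom f) (hg : QuasiHom g) :
    QuasiHom (f ∘ g) := by
  obtain ⟨Cf, hCf⟩ := quasiHom_bound hf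
  obtain ⟨Cg, hCg⟩ := quasiHom_bound hg
  obtain ⟨B, hB⟩ := ((Set.finite_Icc (-Cg) Cg).image (fun d => |f d|)).bddAbove
  have key : ∀ x y : ℤ, |f (g (x + y)) - f (g x) - f (g y)| ≤ Cf + Cf + B := by
    intro x y
    set a := g x
    set b := g y
    set d := g (x + y) - g x - g y with hd
    have hdb : |d| ≤ Cg := hCg x y
    have hgxy : g (x + y) = a + b + d := by simp only [hd, a, b]; ring
    have h1 : |f (a + b + d) - f (a + b) - f d| ≤ Cf := hCf (a + b) d
    have h2 : |f (a + b) - f a - f b| ≤ Cf := hCf a b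
    have h3 : |f d| ≤ B := hB ⟨d, abs_le.mp hdb, rfl⟩
    have : f (g (x + y)) - f a - f b =
        (f (a + b + d) - f (a + b) - f d) + (f (a + b) - f a - f b) + f d := by
      rw [hgxy]; ring
    rw [this]
    calc |(f (a + b + d) - f (a + b) - f d) + (f (a + b) - f a - f b) + f d|
        ≤ |(f (a + b + d) - f (a + b) - f d) + (f (a + b) - f a - f b)| + |f d| :=
          abs_add_le _ _
      _ ≤ (|f (a + b + d) - f (a + b) - f d| + |f (a + b) - f a - f b|) + |f d| := by
          exact add_le_add (abs_add_le _ _) le_rfl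
      _ ≤ Cf + Cf + B := by
          exact add_le_add (add_le_add h1 h2) h3
  apply Set.Finite.subset (Set.finite_Icc (-(Cf + Cf + B)) (Cf + Cf + B))
  rintro z ⟨x, y, rfl⟩
  exact abs_le.mp (key x y)
end

section
/- The relation f ∼ g iff {f(x) − g(x) : x ∈ ℤ} is finite is an equivalence relation on quasihomomorphisms ℤ → ℤ, and is compatible with composition: if f ∼ f' and g ∼ g' then f ∘ g ∼ f' ∘ g'. -/
/-- Equivalence of quasihomomorphisms: bounded difference. -/
def QHEquiv (f g : ℤ → ℤ) : Prop :=
  {z : ℤ | ∃ x : ℤ, z = f x - g x}.Finite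

theorem quasiHom_equiv_and_comp_compat :
    Equivalence (fun f g : {f : ℤ → ℤ // QuasiHom f} => QHEquiv f.1 g.1) ∧
    ∀ f f' g g' : ℤ → ℤ, QuasiHom f → QuasiHom f' → QuasiHom g → QuasiHom g' →
      QHEquiv f f' → QHEquiv g g' → QHEquiv (f ∘ g) (f' ∘ g') := by
  constructor
  · constructor
    · intro f
      apply Set.Finite.subset (Set.finite_singleton (0 : ℤ))
      rintro z ⟨x, rfl⟩
      simp
    · intro f g h
      apply Set.Finite.subset (h.image (fun z => -z))
      rintro z ⟨x, rfl⟩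
      exact ⟨f.1 x - g.1 x, ⟨x, rfl⟩, by ring⟩
    · intro f g h hfg hgh
      apply Set.Finite.subset (Set.Finite.image2 (· + ·) hfg hgh)
      rintro z ⟨x, rfl⟩
      exact ⟨f.1 x - g.1 x, ⟨x, rfl⟩, g.1 x - h.1 x, ⟨x, rfl⟩, by ring⟩
  · intro f f' g g' hf hf' hg hg' hff' hgg'
    apply Set.Finite.subset
      (Set.Finite.image2 (· + ·) (Set.Finite.image2 (· + ·) hff' hf') (hgg'.image f'))
    rintro z ⟨x, rfl⟩
    refine ⟨(f (g x) - f' (g x)) + (f' (g x) - f' (g' x) - f' (g x - g' x)),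
      ⟨f (g x) - f' (g x), ⟨g x, rfl⟩,
       f' (g x) - f' (g' x) - f' (g x - g' x), ⟨g' x, g x - g' x, by ring_nf⟩, rfl⟩,
      f' (g x - g' x), ⟨g x - g' x, ⟨x, rfl⟩, rfl⟩, by simp [Function.comp]; ring⟩
end

section
/- For any quasihomomorphism f : ℤ → ℤ, exactly one of the following holds: (1) f has bounded range; (2) for every C > 0 there exists n₀ with f(x) > C for all x > n₀; (3) for every C > 0 there exists n₀ with f(x) < −C for all x > n₀. -/
private lemma qh_grow (f : ℤ → ℤ) (D : ℤ)
    (hD : ∀ x y : ℤ, |f (x + y) - f x - f y| ≤ D) (n : ℤ) :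
    ∀ k : ℤ, 1 ≤ k → k * (f n - D) + D ≤ f (k * n) := by
  refine Int.le_induction (by simp) ?_
  intro k hk ih
  have h1 := abs_le.mp (hD (k * n) n)
  have : (k + 1) * n = k * n + n := by ring
  rw [this]
  nlinarith [h1.1, h1.2]

private lemma qh_key (f : ℤ → ℤ) (D : ℤ)
    (hD : ∀ x y : ℤ, |f (x + y) - f x - f y| ≤ D) (n : ℤ) (hn : 0 < n)
    (hfn : D < f n) : ∀ C : ℤ, 0 < C → ∃ n₀ : ℤ, ∀ x > n₀, f x > C := by
  intro C hC
  obtain ⟨M, hM⟩ := Finset.exists_le ((Finset.Ico (0:ℤ) n).image (fun r => |f r|))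
  have hM' : ∀ r : ℤ, 0 ≤ r → r < n → |f r| ≤ M := by
    intro r h1 h2
    exact hM _ (Finset.mem_image_of_mem _ (Finset.mem_Ico.mpr ⟨h1, h2⟩))
  have hM0 : 0 ≤ M := le_trans (abs_nonneg (f 0)) (hM' 0 le_rfl hn)
  refine ⟨n * (C + M + 1) + n, fun x hx => ?_⟩
  set k := x / n with hk
  set r := x % n with hr
  have hxeq : n * k + r = x := Int.mul_ediv_add_emod x n
  have hr0 : 0 ≤ r := Int.emod_nonneg x (ne_of_gt hn)
  have hrn : r < n := Int.emod_lt_of_pos x hn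
  have hkC : C + M + 1 < k := by
    have h1 : n * (C + M + 1) < n * k := by linarith
    exact lt_of_mul_lt_mul_left h1 (le_of_lt hn)
  have hk1 : 1 ≤ k := by linarith
  have hgrow := qh_grow f D hD n k hk1
  have h := abs_le.mp (hD (k * n) r)
  have hfr := abs_le.mp (hM' r hr0 hrn)
  have hxeq' : k * n + r = x := by linarith [hxeq]
  rw [hxeq'] at h
  -- f x ≥ f (k*n) + f r - D ≥ k*(f n - D) + D + f r - D ≥ k - M
  have he1 : 1 ≤ f n - D := by linarith
  have : k * 1 ≤ k * (f n - D) := by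
    apply mul_le_mul_of_nonneg_left he1 (by linarith)
  nlinarith [h.1, hgrow, hfr.1]

theorem quasiHom_trichotomy (f : ℤ → ℤ) (hf : QuasiHom f) :
    let P1 := ∃ C : ℤ, ∀ x : ℤ, |f x| ≤ C
    let P2 := ∀ C : ℤ, 0 < C → ∃ n₀ : ℤ, ∀ x > n₀, f x > C
    let P3 := ∀ C : ℤ, 0 < C → ∃ n₀ : ℤ, ∀ x > n₀, f x < -C
    (P1 ∧ ¬P2 ∧ ¬P3) ∨ (¬P1 ∧ P2 ∧ ¬P3) ∨ (¬P1 ∧ ¬P2 ∧ P3) := by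
  intro P1 P2 P3
  -- get a uniform bound D
  obtain ⟨D, hDub⟩ := (hf.image (fun z => |z|)).bddAbove
  have hD : ∀ x y : ℤ, |f (x + y) - f x - f y| ≤ D := by
    intro x y
    exact hDub ⟨_, ⟨x, y, rfl⟩, rfl⟩
  have hD0 : 0 ≤ D := le_trans (abs_nonneg _) (hD 0 0)
  -- exclusivity lemmas
  have h23 : ¬ (P2 ∧ P3) := by
    rintro ⟨h2, h3⟩
    obtain ⟨a, ha⟩ := h2 1 one_pos
    obtain ⟨b, hb⟩ := h3 1 one_pos
    have h1 := ha (max a b + 1) (by linarith [le_max_left a b])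
    have h2 := hb (max a b + 1) (by linarith [le_max_right a b])
    linarith
  have h12 : ∀ C : ℤ, (∀ x : ℤ, |f x| ≤ C) → ¬P2 := by
    intro C hC h2
    obtain ⟨a, ha⟩ := h2 (C + 1) (by linarith [le_trans (abs_nonneg _) (hC 0)])
    have := ha (a + 1) (by linarith)
    have := abs_le.mp (hC (a + 1))
    linarith
  have h13 : ∀ C : ℤ, (∀ x : ℤ, |f x| ≤ C) → ¬P3 := by
    intro C hC h3
    obtain ⟨a, ha⟩ := h3 (C + 1) (by linarith [le_trans (abs_nonneg _) (hC 0)])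
    have := ha (a + 1) (by linarith)
    have := abs_le.mp (hC (a + 1))
    linarith
  by_cases h2 : ∃ n : ℤ, 0 < n ∧ D < f n
  · obtain ⟨n, hn, hfn⟩ := h2
    have hP2 : P2 := qh_key f D hD n hn hfn
    refine Or.inr (Or.inl ⟨?_, hP2, fun h3 => h23 ⟨hP2, h3⟩⟩)
    rintro ⟨C, hC⟩
    exact h12 C hC hP2
  · by_cases h3 : ∃ n : ℤ, 0 < n ∧ f n < -D
    · obtain ⟨n, hn, hfn⟩ := h3
      have hD' : ∀ x y : ℤ, |(-f (x + y)) - (-f x) - (-f y)| ≤ D := by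
        intro x y
        have : (-f (x + y)) - (-f x) - (-f y) = -(f (x + y) - f x - f y) := by ring
        rw [this, abs_neg]; exact hD x y
      have hP3 : P3 := by
        intro C hC
        obtain ⟨n₀, hn₀⟩ := qh_key (fun x => -f x) D hD' n hn (by simpa using by linarith : D < -f n) C hC
        exact ⟨n₀, fun x hx => by have := hn₀ x hx; simp at this; linarith⟩
      refine Or.inr (Or.inr ⟨?_, fun hP2 => h23 ⟨hP2, hP3⟩, hP3⟩)
      rintro ⟨C, hC⟩
      exact h13 C hC hP3
    · -- bounded case
      push_neg at h2 h3
      have hbound : ∀ x : ℤ, |f x| ≤ |f 0| + 2 * D := by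
        intro x
        rcases lt_trichotomy x 0 with hx | hx | hx
        · have hnx : 0 < -x := by linarith
          have h1 := h2 (-x) hnx
          have h2' := h3 (-x) hnx
          have hA := abs_le.mp (hD x (-x))
          simp only [add_neg_cancel] at hA
          rw [abs_le]
          constructor <;> nlinarith [abs_nonneg (f 0), neg_abs_le (f 0), le_abs_self (f 0)]
        · subst hx; linarith [le_abs_self (f 0), abs_nonneg (f 0)]
        · have h1 := h2 x hx
          have h2' := h3 x hx
          rw [abs_le]
          constructor <;> nlinarith [abs_nonneg (f 0)]
      refine Or.inl ⟨⟨_, hbound⟩, h12 _ hbound, h13 _ hbound⟩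
end

section
/- If a and b are distinct reals, then the quasihomomorphisms x ↦ ⌊ax⌋ and x ↦ ⌊bx⌋ are not equivalent, i.e., the set {⌊ax⌋ − ⌊bx⌋ : x ∈ ℤ} is infinite. -/
lemma floor_aux (a b : ℝ) (h : b < a) :
    ¬ BddAbove {z : ℤ | ∃ x : ℤ, z = ⌊a * x⌋ - ⌊b * x⌋} := by
  rintro ⟨M, hM⟩
  have hc : (0:ℝ) < a - b := sub_pos.mpr h
  set x : ℤ := max ⌈((M:ℝ) + 1)/(a - b)⌉ 1 with hx
  have hx1 : ((M:ℝ) + 1)/(a - b) ≤ (x:ℝ) := by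
    calc ((M:ℝ) + 1)/(a - b) ≤ (⌈((M:ℝ) + 1)/(a - b)⌉ : ℝ) := Int.le_ceil _
    _ ≤ (x:ℝ) := Int.cast_le.mpr (le_max_left _ _)
  have hcx : (M:ℝ) + 1 ≤ (a - b) * x := by
    rw [mul_comm]
    exact (div_le_iff₀ hc).mp hx1
  have hmem : (⌊a * x⌋ - ⌊b * x⌋) ∈ {z : ℤ | ∃ x : ℤ, z = ⌊a * x⌋ - ⌊b * x⌋} :=
    ⟨x, rfl⟩
  have hMle : (⌊a * x⌋ - ⌊b * x⌋ : ℤ) ≤ M := hM hmem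
  have h1 : a * x - 1 < (⌊a * x⌋ : ℝ) := Int.sub_one_lt_floor _
  have h2 : (⌊b * x⌋ : ℝ) ≤ b * x := Int.floor_le _
  have : (M:ℝ) < (⌊a * x⌋ - ⌊b * x⌋ : ℤ) := by
    push_cast
    nlinarith
  exact absurd (by exact_mod_cast hMle) (not_le.mpr this)

theorem floor_mul_not_equiv (a b : ℝ) (hab : a ≠ b) :
    {z : ℤ | ∃ x : ℤ, z = ⌊a * x⌋ - ⌊b * x⌋}.Infinite := by
  intro hfin
  rcases lt_or_gt_of_ne hab with h | h
  · -- a < b : negated set is the (b, a) set, which is unbounded above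
    have hfin' : (Neg.neg '' {z : ℤ | ∃ x : ℤ, z = ⌊a * x⌋ - ⌊b * x⌋}).Finite :=
      hfin.image _
    have hsub : {z : ℤ | ∃ x : ℤ, z = ⌊b * x⌋ - ⌊a * x⌋} ⊆
        Neg.neg '' {z : ℤ | ∃ x : ℤ, z = ⌊a * x⌋ - ⌊b * x⌋} := by
      rintro z ⟨x, rfl⟩
      exact ⟨⌊a * x⌋ - ⌊b * x⌋, ⟨x, rfl⟩, by ring⟩
    exact floor_aux b a h ((hfin'.subset hsub).bddAbove)
  · exact floor_aux a b h hfin.bddAbove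
end

section
/- Engel expansion: every real number A with 0 < A ≤ 1 can be written as A = Σ_{n=1}^∞ 1/(a_1 a_2 ⋯ a_n) where (a_n) is a sequence of integers with 2 ≤ a_n ≤ a_{n+1} for all n ≥ 1. -/
noncomputable def eU (A : ℝ) : ℕ → ℝ
  | 0 => A
  | n + 1 => (⌊1 / eU A n⌋ + 1) * eU A n - 1

noncomputable def eA (A : ℝ) (n : ℕ) : ℤ := ⌊1 / eU A n⌋ + 1

theorem engel_expansion (A : ℝ) (h0 : 0 < A) (h1 : A ≤ 1) :
    ∃ a : ℕ → ℤ, (∀ n, 2 ≤ a n) ∧ (∀ n, a n ≤ a (n + 1)) ∧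
      HasSum (fun n : ℕ => 1 / ∏ k ∈ Finset.range (n + 1), (a k : ℝ)) A := by
  set u := eU A with hu
  set a := eA A with ha
  have hrec : ∀ n, u (n + 1) = (a n : ℝ) * u n - 1 := by
    intro n
    simp [hu, ha, eU, eA]
  -- bounds
  have hbound : ∀ n, 0 < u n ∧ u n ≤ 1 := by
    intro n
    induction n with
    | zero => exact ⟨h0, h1⟩
    | succ n ih =>
      obtain ⟨hp, hle⟩ := ih
      have h1u : (1 : ℝ) / u n < (a n : ℝ) := by
        have := Int.lt_floor_add_one (1 / u n)
        simp only [ha, eA]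
        push_cast
        linarith
      have h2u : (a n : ℝ) ≤ 1 / u n + 1 := by
        have := Int.floor_le (1 / u n)
        simp only [ha, eA]
        push_cast
        linarith
      constructor
      · rw [hrec]
        have : (1 / u n) * u n < (a n : ℝ) * u n := by
          exact mul_lt_mul_of_pos_right h1u hp
        rw [one_div_mul_cancel (ne_of_gt hp)] at this
        linarith
      · rw [hrec]
        have : (a n : ℝ) * u n ≤ (1 / u n + 1) * u n :=
          mul_le_mul_of_nonneg_right h2u hp.le
        rw [add_mul, one_div_mul_cancel (ne_of_gt hp), one_mul] at this
        linarith
  have hupos : ∀ n, 0 < u n := fun n => (hbound n).1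
  have hule : ∀ n, u n ≤ 1 := fun n => (hbound n).2
  have ha2 : ∀ n, 2 ≤ a n := by
    intro n
    have : (1 : ℤ) ≤ ⌊1 / u n⌋ := by
      rw [Int.le_floor]
      push_cast
      exact one_le_one_div (hupos n) (hule n)
    simp only [ha, eA, ← hu]; omega
  have humono : ∀ n, u (n + 1) ≤ u n := by
    intro n
    rw [hrec]
    have h2u : (a n : ℝ) ≤ 1 / u n + 1 := by
      have := Int.floor_le (1 / u n)
      simp only [ha, eA]; push_cast; linarith
    have : (a n : ℝ) * u n ≤ (1 / u n + 1) * u n :=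
      mul_le_mul_of_nonneg_right h2u (hupos n).le
    rw [add_mul, one_div_mul_cancel (ne_of_gt (hupos n)), one_mul] at this
    linarith
  have hamono : ∀ n, a n ≤ a (n + 1) := by
    intro n
    have : ⌊1 / u n⌋ ≤ ⌊1 / u (n + 1)⌋ := by
      apply Int.floor_le_floor
      exact one_div_le_one_div_of_le (hupos (n + 1)) (humono n)
    simp only [ha, eA, ← hu]; omega
  refine ⟨a, ha2, hamono, ?_⟩
  set P : ℕ → ℝ := fun n => ∏ k ∈ Finset.range n, (a k : ℝ) with hP
  have hPpos : ∀ n, 0 < P n := by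
    intro n
    apply Finset.prod_pos
    intro k _
    have h := ha2 k
    have : (0 : ℤ) < a k := by omega
    exact_mod_cast this
  have hPsucc : ∀ n, P (n + 1) = P n * (a n : ℝ) := by
    intro n
    simp [hP, Finset.prod_range_succ]
  have hane : ∀ n, (a n : ℝ) ≠ 0 := by
    intro n
    have h := ha2 n
    have : (0 : ℤ) < a n := by omega
    exact_mod_cast this.ne'
  have hident : ∀ N, (∑ n ∈ Finset.range N, 1 / P (n + 1)) + u N / P N = A := by
    intro N
    induction N with
    | zero => simp [hP, hu, eU]
    | succ N ih =>
      rw [Finset.sum_range_succ, ← ih]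
      have key : 1 / P (N + 1) + u (N + 1) / P (N + 1) = u N / P N := by
        rw [← add_div, hrec, hPsucc]
        have : 1 + ((a N : ℝ) * u N - 1) = (a N : ℝ) * u N := by ring
        rw [this]
        rw [mul_comm (a N : ℝ) (u N), mul_div_mul_right _ _ (hane N)]
      linarith [key]
  have hPge : ∀ n, (2 : ℝ) ^ n ≤ P n := by
    intro n
    simp only [hP]
    calc (2 : ℝ) ^ n = ∏ _k ∈ Finset.range n, (2 : ℝ) := by
          simp [Finset.prod_const]
      _ ≤ ∏ k ∈ Finset.range n, (a k : ℝ) := by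
          apply Finset.prod_le_prod
          · intro i _; norm_num
          · intro i _
            exact_mod_cast ha2 i
  have hrem : Filter.Tendsto (fun N => u N / P N) Filter.atTop (nhds 0) := by
    have hsq : ∀ N, u N / P N ≤ (1 / 2) ^ N := by
      intro N
      rw [div_pow, one_pow]
      apply div_le_div₀ (by positivity) (hule N) (by positivity) (hPge N)
    have hnn : ∀ N, 0 ≤ u N / P N := fun N =>
      div_nonneg (hupos N).le (hPpos N).le
    apply squeeze_zero hnn hsq
    exact tendsto_pow_atTop_nhds_zero_of_lt_one (by norm_num) (by norm_num)
  rw [hasSum_iff_tendsto_nat_of_nonneg]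
  · have heq : (fun N => ∑ n ∈ Finset.range N,
        1 / ∏ k ∈ Finset.range (n + 1), (a k : ℝ)) = fun N => A - u N / P N := by
      funext N
      have := hident N
      simp only [hP]
      linarith
    rw [heq]
    simpa using Filter.Tendsto.const_sub A hrem
  · intro i
    have : (0:ℝ) < ∏ k ∈ Finset.range (i + 1), (a k : ℝ) := by
      simpa [hP] using hPpos (i + 1)
    positivity
end

section
/- Sylvester expansion: every real number A with 0 < A < 1 can be written as A = Σ_{n=1}^∞ 1/a_n where (a_n) is a sequence of integers with a_1 ≥ 2 and a_{n+1} ≥ a_n(a_n − 1) + 1 for all n ≥ 1. -/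
noncomputable def sylF (r : ℝ) : ℤ := ⌊1/r⌋ + 1

lemma sylF_step {r : ℝ} (h0 : 0 < r) (h1 : r < 1) :
    2 ≤ sylF r ∧ 1/((sylF r : ℤ) : ℝ) < r ∧ r ≤ 1/(((sylF r : ℤ) : ℝ) - 1) := by
  have hr1 : 1 < 1/r := by
    rw [lt_div_iff₀ h0]; linarith
  have hf : (1:ℤ) ≤ ⌊1/r⌋ := by
    rw [Int.le_floor]; exact_mod_cast hr1.le
  have h2 : 2 ≤ sylF r := by unfold sylF; omega
  have hbr : (1/r : ℝ) < (sylF r : ℝ) := by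
    unfold sylF; push_cast; exact Int.lt_floor_add_one _
  have hbpos : (0:ℝ) < (sylF r : ℝ) := by
    have : (2:ℝ) ≤ (sylF r : ℝ) := by exact_mod_cast h2
    linarith
  constructor
  · exact h2
  constructor
  · rw [div_lt_iff₀ hbpos]
    rw [div_lt_iff₀ h0] at hbr
    linarith [mul_comm r ((sylF r : ℝ))]
  · have hfl : ((sylF r : ℝ) - 1) ≤ 1/r := by
      unfold sylF; push_cast
      have := Int.floor_le (1/r)
      linarith
    have hpos : (0:ℝ) < (sylF r : ℝ) - 1 := by linarith
    rw [le_div_iff₀ hpos]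
    rw [le_div_iff₀ h0] at hfl
    linarith [mul_comm r ((sylF r : ℝ) - 1)]

noncomputable def rem (A : ℝ) : ℕ → ℝ
  | 0 => A
  | n+1 => rem A n - 1/((sylF (rem A n)) : ℝ)

lemma rem_pos_lt (A : ℝ) (h0 : 0 < A) (h1 : A < 1) :
    ∀ n, 0 < rem A n ∧ rem A n < 1 := by
  intro n
  induction n with
  | zero => exact ⟨h0, h1⟩
  | succ n ih =>
    obtain ⟨hp, hl⟩ := ih
    obtain ⟨h2, hlt, _⟩ := sylF_step hp hl
    have hbpos : (0:ℝ) < (sylF (rem A n) : ℝ) := by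
      have h2' : (2:ℝ) ≤ (sylF (rem A n) : ℝ) := by exact_mod_cast h2
      linarith
    have hpos : 0 < 1/((sylF (rem A n)) : ℝ) := by positivity
    constructor
    · show 0 < rem A n - 1/((sylF (rem A n)) : ℝ)
      linarith
    · show rem A n - 1/((sylF (rem A n)) : ℝ) < 1
      linarith

theorem sylvester_expansion (A : ℝ) (h0 : 0 < A) (h1 : A < 1) :
    ∃ a : ℕ → ℤ, 2 ≤ a 0 ∧ (∀ n, a n * (a n - 1) + 1 ≤ a (n + 1)) ∧
      HasSum (fun n : ℕ => 1 / (a n : ℝ)) A := by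
  set a : ℕ → ℤ := fun n => sylF (rem A n) with ha
  have hinv := rem_pos_lt A h0 h1
  have ha2 : ∀ n, 2 ≤ a n := fun n => (sylF_step (hinv n).1 (hinv n).2).1
  have hbound : ∀ n, rem A (n+1) ≤ 1/((a n : ℝ) * ((a n : ℝ) - 1)) := by
    intro n
    obtain ⟨hp, hl⟩ := hinv n
    obtain ⟨h2, hlt, hle⟩ := sylF_step hp hl
    have hb : (2:ℝ) ≤ (a n : ℝ) := by exact_mod_cast ha2 n
    have h1b : (0:ℝ) < (a n : ℝ) - 1 := by linarith
    have h0b : (0:ℝ) < (a n : ℝ) := by linarith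
    have key : 1/((a n : ℝ) - 1) - 1/(a n : ℝ) = 1/((a n : ℝ) * ((a n : ℝ) - 1)) := by
      field_simp; ring
    show rem A n - 1/((a n : ℝ)) ≤ _
    rw [← key]
    have : rem A n ≤ 1/((a n : ℝ) - 1) := hle
    linarith
  have hgrow : ∀ n, a n * (a n - 1) + 1 ≤ a (n + 1) := by
    intro n
    have hb : (2:ℤ) ≤ a n := ha2 n
    have hprodpos : (0:ℤ) < a n * (a n - 1) := by nlinarith
    have hrp : 0 < rem A (n+1) := (hinv (n+1)).1
    have h := hbound n
    have hcast : (0:ℝ) < (a n : ℝ) * ((a n : ℝ) - 1) := by exact_mod_cast hprodpos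
    have : ((a n * (a n - 1) : ℤ) : ℝ) ≤ 1 / rem A (n+1) := by
      push_cast
      rw [le_div_iff₀ hrp]
      have h2' := (le_div_iff₀ hcast).mp h
      nlinarith
    have hfl : a n * (a n - 1) ≤ ⌊1 / rem A (n+1)⌋ := Int.le_floor.mpr this
    show _ ≤ sylF (rem A (n+1))
    unfold sylF
    omega
  -- a n ≥ n + 2
  have hlin : ∀ n : ℕ, (n : ℤ) + 2 ≤ a n := by
    intro n
    induction n with
    | zero => simpa using ha2 0
    | succ n ih =>
      have := hgrow n
      have h2 := ha2 n
      push_cast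
      nlinarith
  -- partial sums
  have hpsum : ∀ n, ∑ k ∈ Finset.range n, 1/((a k : ℝ)) = A - rem A n := by
    intro n
    induction n with
    | zero => simp [rem]
    | succ n ih =>
      rw [Finset.sum_range_succ, ih]
      show _ = A - (rem A n - 1/((a n : ℝ)))
      ring
  have hnonneg : ∀ n, 0 ≤ 1/((a n : ℝ)) := by
    intro n
    have : (2:ℝ) ≤ (a n : ℝ) := by exact_mod_cast ha2 n
    positivity
  -- rem tends to 0
  have hremto : Filter.Tendsto (rem A) Filter.atTop (nhds 0) := by
    refine squeeze_zero' (Filter.Eventually.of_forall fun n => (hinv n).1.le) ?_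
      tendsto_one_div_atTop_nhds_zero_nat
    · filter_upwards [Filter.eventually_ge_atTop 1] with n hn
      obtain ⟨m, rfl⟩ := Nat.exists_eq_add_of_le hn
      calc rem A (1 + m) = rem A (m + 1) := by rw [Nat.add_comm]
        _ ≤ 1/((a m : ℝ) * ((a m : ℝ) - 1)) := hbound m
        _ ≤ 1/((1 + m : ℕ) : ℝ) := by
            have hm : ((m:ℤ) + 2 : ℝ) ≤ (a m : ℝ) := by exact_mod_cast hlin m
            have : ((1 + m : ℕ) : ℝ) ≤ (a m : ℝ) * ((a m : ℝ) - 1) := by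
              push_cast at hm ⊢
              nlinarith
            apply one_div_le_one_div_of_le
            · positivity
            · exact this
  have htend : Filter.Tendsto (fun n => ∑ k ∈ Finset.range n, 1/((a k : ℝ)))
      Filter.atTop (nhds A) := by
    simp_rw [hpsum]
    have := Filter.Tendsto.sub (tendsto_const_nhds (x := A)) hremto
    simpa using this
  have hsummable : Summable (fun n : ℕ => 1/((a n : ℝ))) := by
    apply summable_of_sum_range_le hnonneg
    intro n
    rw [hpsum]
    have := (hinv n).1
    linarith
  exact ⟨a, ha2 0, hgrow, (hsummable.hasSum_iff_tendsto_nat).mpr htend⟩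
end

section
/- Cantor product: every real number a > 1 can be written as the infinite product a = Π_{k=1}^∞ (1 + 1/a_k) where (a_k) is a sequence of positive integers with a_{k+1} ≥ a_k² for all k ≥ 1. -/
open Filter Finset

/-- One step of the Cantor product construction: divide away the factor `1 + 1/k`
where `k = ⌊1/(r-1)⌋ + 1`. -/
noncomputable def cantorNxt (r : ℝ) : ℝ :=
  r * ((⌊1 / (r - 1)⌋₊ : ℝ) + 1) / ((⌊1 / (r - 1)⌋₊ : ℝ) + 2)

noncomputable def cantorRs (a : ℝ) : ℕ → ℝ
  | 0 => a
  | n + 1 => cantorNxt (cantorRs a n)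

noncomputable def cantorKs (a : ℝ) (n : ℕ) : ℕ := ⌊1 / (cantorRs a n - 1)⌋₊ + 1

lemma cantorA (r : ℝ) (hr : 1 < r) : 1 < ((⌊1 / (r - 1)⌋₊ : ℝ) + 1) * (r - 1) := by
  have hr' : (0 : ℝ) < r - 1 := by linarith
  have h := Nat.lt_floor_add_one (1 / (r - 1))
  calc (1 : ℝ) = (1 / (r - 1)) * (r - 1) := by field_simp
    _ < ((⌊1 / (r - 1)⌋₊ : ℝ) + 1) * (r - 1) := by
        exact mul_lt_mul_of_pos_right h hr'

lemma cantorB (r : ℝ) (hr : 1 < r) : (⌊1 / (r - 1)⌋₊ : ℝ) * (r - 1) ≤ 1 := by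
  have hr' : (0 : ℝ) < r - 1 := by linarith
  have h : (⌊1 / (r - 1)⌋₊ : ℝ) ≤ 1 / (r - 1) := Nat.floor_le (by positivity)
  calc (⌊1 / (r - 1)⌋₊ : ℝ) * (r - 1) ≤ (1 / (r - 1)) * (r - 1) :=
        mul_le_mul_of_nonneg_right h hr'.le
    _ = 1 := by field_simp

lemma cantorNxt_gt (r : ℝ) (hr : 1 < r) : 1 < cantorNxt r := by
  have hA := cantorA r hr
  set m : ℝ := (⌊1 / (r - 1)⌋₊ : ℝ) with hm
  have hm0 : 0 ≤ m := Nat.cast_nonneg _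
  have hd : (0 : ℝ) < m + 2 := by linarith
  rw [cantorNxt, ← hm, lt_div_iff₀ hd]
  nlinarith

lemma cantorNxt_contract (r : ℝ) (hr : 1 < r) : cantorNxt r - 1 ≤ (2 / 3) * (r - 1) := by
  have hB := cantorB r hr
  have hr' : (0 : ℝ) < r - 1 := by linarith
  set m : ℝ := (⌊1 / (r - 1)⌋₊ : ℝ) with hm
  have hm0 : 0 ≤ m := Nat.cast_nonneg _
  have hd : (0 : ℝ) < m + 2 := by linarith
  rw [cantorNxt, ← hm, div_sub_one hd.ne', div_le_iff₀ hd]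
  nlinarith

lemma cantorNxt_k (r : ℝ) (hr : 1 < r) :
    (⌊1 / (r - 1)⌋₊ + 1) ^ 2 ≤ ⌊1 / (cantorNxt r - 1)⌋₊ + 1 := by
  have hB := cantorB r hr
  have hr' : (0 : ℝ) < r - 1 := by linarith
  have hr2 : (0 : ℝ) < cantorNxt r - 1 := by
    have := cantorNxt_gt r hr; linarith
  set m : ℝ := (⌊1 / (r - 1)⌋₊ : ℝ) with hm
  have hm0 : 0 ≤ m := Nat.cast_nonneg _
  have hd : (0 : ℝ) < m + 2 := by linarith
  -- real inequality : ((m+1)^2 - 1) * (cantorNxt r - 1) ≤ 1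
  have hsub : cantorNxt r - 1 = (r * (m + 1) - (m + 2)) / (m + 2) := by
    rw [cantorNxt, ← hm, div_sub_one hd.ne']
  have hkey : ((m + 1) ^ 2 - 1) * (cantorNxt r - 1) ≤ 1 := by
    rw [hsub, ← mul_div_assoc, div_le_iff₀ hd]
    nlinarith
  have h1 : (m + 1) ^ 2 - 1 ≤ 1 / (cantorNxt r - 1) := by
    rw [le_div_iff₀ hr2]; exact hkey
  have h2 : (1 : ℝ) / (cantorNxt r - 1) < (⌊1 / (cantorNxt r - 1)⌋₊ : ℝ) + 1 :=
    Nat.lt_floor_add_one _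
  have h3 : ((⌊1 / (r - 1)⌋₊ + 1 : ℕ) : ℝ) ^ 2 <
      ((⌊1 / (cantorNxt r - 1)⌋₊ + 1 : ℕ) : ℝ) + 1 := by
    push_cast
    rw [← hm]
    nlinarith
  have h4 : (⌊1 / (r - 1)⌋₊ + 1) ^ 2 < ⌊1 / (cantorNxt r - 1)⌋₊ + 1 + 1 := by
    exact_mod_cast h3
  omega

theorem cantor_product (a : ℝ) (ha : 1 < a) :
    ∃ k : ℕ → ℕ, (∀ n, 0 < k n) ∧ (∀ n, (k n) ^ 2 ≤ k (n + 1)) ∧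
      Filter.Tendsto (fun N => ∏ i ∈ Finset.range N, (1 + 1 / (k i : ℝ)))
        Filter.atTop (nhds a) := by
  have hrs : ∀ n, 1 < cantorRs a n := by
    intro n
    induction n with
    | zero => exact ha
    | succ n ih => exact cantorNxt_gt _ ih
  have hpos : ∀ n, 0 < cantorKs a n := fun n => Nat.succ_pos _
  have hsq : ∀ n, (cantorKs a n) ^ 2 ≤ cantorKs a (n + 1) := by
    intro n
    exact cantorNxt_k _ (hrs n)
  have hgeom : ∀ n, cantorRs a n - 1 ≤ (2 / 3 : ℝ) ^ n * (a - 1) := by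
    intro n
    induction n with
    | zero => simp [cantorRs]
    | succ n ih =>
        have h1 := cantorNxt_contract _ (hrs n)
        calc cantorRs a (n + 1) - 1 ≤ (2 / 3) * (cantorRs a n - 1) := h1
          _ ≤ (2 / 3) * ((2 / 3 : ℝ) ^ n * (a - 1)) := by
              have : (0:ℝ) ≤ 2/3 := by norm_num
              exact mul_le_mul_of_nonneg_left ih this
          _ = (2 / 3 : ℝ) ^ (n + 1) * (a - 1) := by ring
  -- rs tends to 1
  have htendsto0 : Tendsto (fun n => cantorRs a n - 1) atTop (nhds 0) := by
    have hlim : Tendsto (fun n => (2 / 3 : ℝ) ^ n * (a - 1)) atTop (nhds 0) := by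
      have := tendsto_pow_atTop_nhds_zero_of_lt_one (by norm_num : (0:ℝ) ≤ 2/3)
        (by norm_num : (2/3 : ℝ) < 1)
      simpa using this.mul_const (a - 1)
    refine squeeze_zero (fun n => by have := hrs n; linarith) (fun n => hgeom n) hlim
  have htendsto1 : Tendsto (fun n => cantorRs a n) atTop (nhds 1) := by
    have := htendsto0.add_const 1
    simpa using this
  -- product identity
  have hk_cast : ∀ n, ((cantorKs a n : ℕ) : ℝ) = (⌊1 / (cantorRs a n - 1)⌋₊ : ℝ) + 1 := by
    intro n; rw [cantorKs]; push_cast; ring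
  have hprod : ∀ N, ∏ i ∈ Finset.range N, (1 + 1 / (cantorKs a i : ℝ)) = a / cantorRs a N := by
    intro N
    induction N with
    | zero => simp [cantorRs, (by linarith : a ≠ 0)]
    | succ N ih =>
        rw [Finset.prod_range_succ, ih]
        have hrN := hrs N
        have hrN0 : cantorRs a N ≠ 0 := by linarith
        have hk0 : ((cantorKs a N : ℕ) : ℝ) ≠ 0 := by
          exact_mod_cast (hpos N).ne'
        show a / cantorRs a N * (1 + 1 / (cantorKs a N : ℝ)) = a / cantorRs a (N + 1)
    -- unfold cantorRs (N+1)
        have hnext : cantorRs a (N + 1) = cantorRs a N * ((cantorKs a N : ℝ)) / ((cantorKs a N : ℝ) + 1) := by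
          show cantorNxt (cantorRs a N) = _
          rw [cantorNxt, hk_cast]
          ring_nf
        rw [hnext]
        have hk1 : ((cantorKs a N : ℝ) + 1) ≠ 0 := by positivity
        field_simp
  refine ⟨cantorKs a, hpos, hsq, ?_⟩
  have : Tendsto (fun N => a / cantorRs a N) atTop (nhds a) := by
    have := Tendsto.div (tendsto_const_nhds (x := a)) htendsto1 one_ne_zero
    rw [div_one] at this; exact this
  simpa only [hprod] using this
end
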